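/- Let n ≥ 1, λ > 0, and 1 < q < 3. There is no smooth function f : ℝⁿ → ℝ, not identically zero, satisfying the eigenvalue equation Δf(x) = λ f(x) for all x ∈ ℝⁿ and having 2-finite growth liminf_{r→∞} (1/r²) ∫_{B(r)} |f(x)|^q dx < ∞. Equivalently, any such eigenfunction with this growth is identically zero. -/

import Mathlib

open MeasureTheory Filter Metric Topology

/-- The Euclidean Laplacian of `f : ℝⁿ → ℝ` at `x`: the sum over the standard
orthonormal basis of the second directional derivatives (the trace of the second
derivative of `f` at `x`). -/
noncomputable def lap {n : ℕ} (f : EuclideanSpace ℝ (Fin n) → ℝ)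
    (x : EuclideanSpace ℝ (Fin n)) : ℝ :=
  ∑ i : Fin n,
    fderiv ℝ (fun y => fderiv ℝ f y (EuclideanSpace.single i 1)) x (EuclideanSpace.single i 1)


noncomputable def cutχ : ℝ → ℝ := fun t => 1 - Real.smoothTransition (t - 1)

lemma cutχ_contDiff : ContDiff ℝ (⊤:ℕ∞) cutχ := by
  have h : ContDiff ℝ (⊤:ℕ∞) fun t : ℝ => Real.smoothTransition (t - 1) :=
    Real.smoothTransition.contDiff.comp (contDiff_id.sub contDiff_const)
  exact contDiff_const.sub h

lemma cutχ_one {t : ℝ} (h : t ≤ 1) : cutχ t = 1 := by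
  unfold cutχ
  rw [Real.smoothTransition.zero_of_nonpos (show t - 1 ≤ 0 by linarith)]
  ring

lemma cutχ_zero {t : ℝ} (h : 2 ≤ t) : cutχ t = 0 := by
  unfold cutχ
  rw [Real.smoothTransition.one_of_one_le (show (1:ℝ) ≤ t - 1 by linarith)]
  ring

lemma cutχ_nonneg (t : ℝ) : 0 ≤ cutχ t := by
  have := Real.smoothTransition.le_one (t - 1); unfold cutχ; linarith

lemma cutχ_le_one (t : ℝ) : cutχ t ≤ 1 := by
  have := Real.smoothTransition.nonneg (t - 1); unfold cutχ; linarith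

lemma cutχ_deriv_zero_lt {t : ℝ} (h : t < 1) : deriv cutχ t = 0 := by
  have he : cutχ =ᶠ[nhds t] (fun _ => (1:ℝ)) :=
    Filter.eventuallyEq_of_mem (Iio_mem_nhds h) (fun y hy => cutχ_one (le_of_lt hy))
  rw [he.deriv_eq, deriv_const]

lemma cutχ_deriv_zero_gt {t : ℝ} (h : 2 < t) : deriv cutχ t = 0 := by
  have he : cutχ =ᶠ[nhds t] (fun _ => (0:ℝ)) :=
    Filter.eventuallyEq_of_mem (Ioi_mem_nhds h) (fun y hy => cutχ_zero (le_of_lt hy))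
  rw [he.deriv_eq, deriv_const]

lemma cutχ_deriv_bound : ∃ C : ℝ, 0 ≤ C ∧ ∀ t, |deriv cutχ t| ≤ C := by
  have hcont : Continuous (deriv cutχ) :=
    cutχ_contDiff.continuous_deriv (by exact_mod_cast le_top)
  obtain ⟨C, hC⟩ := (isCompact_Icc (a := (1:ℝ)) (b := 2)).exists_bound_of_continuousOn
    (hcont.abs.continuousOn)
  refine ⟨C, le_trans (abs_nonneg _) (by simpa using hC 1 (by norm_num)), fun t => ?_⟩
  rcases lt_or_ge t 1 with h | h
  · rw [cutχ_deriv_zero_lt h]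
    simpa using le_trans (abs_nonneg _) (by simpa using hC 1 (by norm_num))
  rcases le_or_gt t 2 with h2 | h2
  · simpa using hC t ⟨h, h2⟩
  · rw [cutχ_deriv_zero_gt h2]
    simpa using le_trans (abs_nonneg _) (by simpa using hC 1 (by norm_num))

section phiRsec
variable {n : ℕ}

noncomputable def phiR (R : ℝ) (x : EuclideanSpace ℝ (Fin n)) : ℝ := cutχ (‖x‖^2 / R^2)

lemma phiR_contDiff (R : ℝ) : ContDiff ℝ (⊤:ℕ∞) (phiR (n := n) R) :=
  cutχ_contDiff.comp ((contDiff_norm_sq ℝ).div_const _)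

lemma phiR_nonneg (R : ℝ) (x : EuclideanSpace ℝ (Fin n)) : 0 ≤ phiR R x := cutχ_nonneg _
lemma phiR_le_one (R : ℝ) (x : EuclideanSpace ℝ (Fin n)) : phiR R x ≤ 1 := cutχ_le_one _

lemma phiR_eq_one {R : ℝ} (hR : 0 < R) {x : EuclideanSpace ℝ (Fin n)} (hx : x ∈ ball (0:EuclideanSpace ℝ (Fin n)) R) :
    phiR R x = 1 := by
  apply cutχ_one
  rw [div_le_one (by positivity)]
  have : ‖x‖ < R := by simpa using hx
  nlinarith [norm_nonneg x]

lemma phiR_zero {R : ℝ} (hR : 0 < R) {x : EuclideanSpace ℝ (Fin n)}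
    (hx : x ∉ closedBall (0:EuclideanSpace ℝ (Fin n)) (2*R)) : phiR R x = 0 := by
  apply cutχ_zero
  rw [le_div_iff₀ (by positivity)]
  have : 2*R < ‖x‖ := by simpa using not_le.1 (fun h => hx (by simpa using h))
  nlinarith

lemma phiR_hasCompactSupport {R : ℝ} (hR : 0 < R) : HasCompactSupport (phiR (n := n) R) :=
  HasCompactSupport.intro (isCompact_closedBall _ _) (fun _ hx => phiR_zero hR hx)

lemma phiR_hasFDerivAt {R : ℝ} (hR : 0 < R) (x : EuclideanSpace ℝ (Fin n)) :
    HasFDerivAt (phiR R) ((deriv cutχ (‖x‖^2 / R^2)) • ((R^2)⁻¹ • (2 • (innerSL ℝ x)))) x := by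
  have h1 : HasFDerivAt (fun y : EuclideanSpace ℝ (Fin n) => ‖y‖^2 / R^2)
      ((R^2)⁻¹ • (2 • (innerSL ℝ x))) x := by
    have := (hasStrictFDerivAt_norm_sq x).hasFDerivAt.const_smul (R^2)⁻¹
    simpa [div_eq_inv_mul, smul_eq_mul, Pi.smul_def] using this
  have h2 : HasDerivAt cutχ (deriv cutχ (‖x‖^2 / R^2)) (‖x‖^2 / R^2) :=
    ((cutχ_contDiff.differentiable (by simp)) _).hasDerivAt
  exact h2.comp_hasFDerivAt x h1

lemma phiR_fderiv_apply {R : ℝ} (hR : 0 < R) (x : EuclideanSpace ℝ (Fin n)) (i : Fin n) :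
    fderiv ℝ (phiR R) x (EuclideanSpace.single i 1)
      = deriv cutχ (‖x‖^2 / R^2) * (2 * x i) / R^2 := by
  rw [(phiR_hasFDerivAt hR x).fderiv]
  simp only [ContinuousLinearMap.smul_apply, smul_eq_mul, innerSL_apply_apply]
  rw [EuclideanSpace.inner_single_right]
  simp [mul_comm, mul_assoc, mul_left_comm]
  ring

lemma sum_sq_coords (x : EuclideanSpace ℝ (Fin n)) : ∑ i, (x i)^2 = ‖x‖^2 := by
  rw [EuclideanSpace.norm_eq, Real.sq_sqrt (by positivity)]
  simp [sq_abs]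

lemma phiR_grad_bound {R C : ℝ} (hR : 0 < R) (hC0 : 0 ≤ C) (hC : ∀ t, |deriv cutχ t| ≤ C)
    (x : EuclideanSpace ℝ (Fin n)) :
    ∑ i, (fderiv ℝ (phiR R) x (EuclideanSpace.single i 1))^2 ≤ 12*C^2/R^2 := by
  have hsum : ∑ i, (fderiv ℝ (phiR R) x (EuclideanSpace.single i 1))^2
      = (deriv cutχ (‖x‖^2/R^2))^2 * 4 * ‖x‖^2 / R^4 := by
    have h1 : ∀ i : Fin n, (fderiv ℝ (phiR R) x (EuclideanSpace.single i 1))^2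
        = ((deriv cutχ (‖x‖^2/R^2))^2 * 4 / R^4) * (x i)^2 := by
      intro i; rw [phiR_fderiv_apply hR]; ring
    rw [Finset.sum_congr rfl (fun i _ => h1 i), ← Finset.mul_sum, sum_sq_coords]
    ring
  rw [hsum]
  rcases le_or_gt (‖x‖^2/R^2) 3 with h | h
  · have hx3 : ‖x‖^2 ≤ 3*R^2 := by
      rw [div_le_iff₀ (by positivity)] at h; linarith
    have hD := hC (‖x‖^2/R^2)
    have hD2 : (deriv cutχ (‖x‖^2/R^2))^2 ≤ C^2 := by
      have := sq_abs (deriv cutχ (‖x‖^2/R^2))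
      nlinarith [abs_nonneg (deriv cutχ (‖x‖^2/R^2))]
    rw [div_le_div_iff₀ (by positivity) (by positivity)]
    nlinarith [mul_le_mul hD2 hx3 (by positivity) (sq_nonneg C), sq_nonneg R,
      mul_pos (mul_pos hR hR) (mul_pos hR hR)]
  · rw [cutχ_deriv_zero_gt (by linarith)]
    simp
    positivity

end phiRsec


lemma ptwise {m : ℕ} (q ε c : ℝ) (hε : 0 < ε) (hc : 0 < c) (hc1 : c ≤ 1) (hcq : c ≤ q-1)
    (a b : ℝ) (dφ df : Fin m → ℝ) :
    -(∑ i, (2*a*(dφ i)*b*(b^2+ε)^((q-2)/2) + a^2*(df i)*(b^2+ε)^((q-2)/2)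
        + a^2*b*(2*((q-2)/2)*b*(b^2+ε)^((q-2)/2-1))*(df i)) * (df i))
    ≤ (1/c) * (∑ i, (dφ i)^2) * (b^2 * (b^2+ε)^((q-2)/2)) := by
  have hpos : (0:ℝ) < b^2 + ε := by positivity
  set w := (b^2+ε)^((q-2)/2) with hwdef
  set w1 := (b^2+ε)^((q-2)/2-1) with hw1def
  have hw0 : 0 < w := Real.rpow_pos_of_pos hpos _
  have hw10 : 0 < w1 := Real.rpow_pos_of_pos hpos _
  have hw : w = w1 * (b^2+ε) := by
    rw [hwdef, hw1def, show (q-2)/2 = ((q-2)/2 - 1) + 1 by ring,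
      Real.rpow_add_one (ne_of_gt hpos)]
    ring_nf
  have hexp : (∑ i, (2*a*(dφ i)*b*w + a^2*(df i)*w
        + a^2*b*(2*((q-2)/2)*b*w1)*(df i)) * (df i))
      = (2*a*b*w)*(∑ i, dφ i * df i) + (a^2*w)*(∑ i, (df i)^2)
        + (a^2*b^2*(q-2)*w1)*(∑ i, (df i)^2) := by
    rw [Finset.mul_sum, Finset.mul_sum, Finset.mul_sum, ← Finset.sum_add_distrib,
      ← Finset.sum_add_distrib]
    exact Finset.sum_congr rfl (fun i _ => by ring)
  have hcc : c * (1/c) = 1 := by field_simp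
  have perterm : ∀ i : Fin m, ((-(c*a^2*w)) * (df i)^2 + (-((1/c)*b^2*w)) * (dφ i)^2)
      ≤ (2*a*b*w) * (dφ i * df i) := by
    intro i
    have key : 0 ≤ w * (c*a*(df i) + b*(dφ i))^2 := mul_nonneg hw0.le (sq_nonneg _)
    have hcc2 : c * ((1/c)*b^2*w) * (dφ i)^2 = b^2*w*(dφ i)^2 := by field_simp
    have goal' : c * ((-(c*a^2*w)) * (df i)^2 + (-((1/c)*b^2*w)) * (dφ i)^2)
        ≤ c * ((2*a*b*w) * (dφ i * df i)) := by nlinarith [key, hcc2]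
    exact le_of_mul_le_mul_left goal' hc
  have h1 := Finset.sum_le_sum (fun i (_ : i ∈ Finset.univ) => perterm i)
  rw [Finset.sum_add_distrib, ← Finset.mul_sum, ← Finset.mul_sum, ← Finset.mul_sum] at h1
  have h2 : c*w ≤ w + (q-2)*b^2*w1 := by
    have key : 0 ≤ w1 * ((q-1-c)*b^2 + (1-c)*ε) := by
      apply mul_nonneg hw10.le
      nlinarith [sq_nonneg b]
    nlinarith [hw]
  have hS0 : (0:ℝ) ≤ ∑ i, (df i)^2 := Finset.sum_nonneg (fun i _ => sq_nonneg _)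
  have h2' := mul_le_mul_of_nonneg_left h2 (mul_nonneg (sq_nonneg a) hS0)
  rw [hexp]
  nlinarith [h1, h2']



section
variable {n : ℕ}

noncomputable def Wfn (f : EuclideanSpace ℝ (Fin n) → ℝ) (q ε : ℝ) :
    EuclideanSpace ℝ (Fin n) → ℝ := fun y => (f y^2 + ε)^((q-2)/2)

noncomputable def Gfn (f φ : EuclideanSpace ℝ (Fin n) → ℝ) (q ε : ℝ) :
    EuclideanSpace ℝ (Fin n) → ℝ := fun y => φ y^2 * f y * Wfn f q ε y

noncomputable def Ffn (f : EuclideanSpace ℝ (Fin n) → ℝ) (i : Fin n) :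
    EuclideanSpace ℝ (Fin n) → ℝ := fun y => fderiv ℝ f y (EuclideanSpace.single i 1)

variable {f φ : EuclideanSpace ℝ (Fin n) → ℝ} {q ε c lam : ℝ}

lemma Wfn_hasFDerivAt (hf : ContDiff ℝ (⊤:ℕ∞) f) (hε : 0 < ε)
    (x : EuclideanSpace ℝ (Fin n)) :
    HasFDerivAt (Wfn f q ε)
      ((((q-2)/2) * (f x^2+ε)^((q-2)/2-1) * (2*f x)) • fderiv ℝ f x) x := by
  have hfd : ∀ y, HasFDerivAt f (fderiv ℝ f y) y := fun y =>
    ((hf.differentiable (by simp)) y).hasFDerivAt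
  have hpos : 0 < f x^2 + ε := by positivity
  have hsq : HasFDerivAt (fun y => f y^2 + ε) ((2*f x) • fderiv ℝ f x) x := by
    have h0 := ((hfd x).mul (hfd x)).add_const ε
    simpa [pow_two, two_mul, add_smul] using h0
  have hr : HasDerivAt (fun t : ℝ => t^((q-2)/2))
      (((q-2)/2) * (f x^2+ε)^((q-2)/2-1)) (f x^2+ε) :=
    Real.hasDerivAt_rpow_const (Or.inl hpos.ne')
  have h2 := hr.comp_hasFDerivAt x hsq
  unfold Wfn; simpa [Function.comp_def, smul_smul, mul_assoc] using h2

lemma Gfn_fderiv_apply (hf : ContDiff ℝ (⊤:ℕ∞) f) (hφ : ContDiff ℝ (⊤:ℕ∞) φ)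
    (hε : 0 < ε) (x : EuclideanSpace ℝ (Fin n)) (i : Fin n) :
    fderiv ℝ (Gfn f φ q ε) x (EuclideanSpace.single i 1)
      = 2*(φ x)*(fderiv ℝ φ x (EuclideanSpace.single i 1))*(f x)*(f x^2+ε)^((q-2)/2)
        + (φ x)^2*(Ffn f i x)*(f x^2+ε)^((q-2)/2)
        + (φ x)^2*(f x)*(2*((q-2)/2)*(f x)*(f x^2+ε)^((q-2)/2-1))*(Ffn f i x) := by
  have hfd : ∀ y, HasFDerivAt f (fderiv ℝ f y) y := fun y =>
    ((hf.differentiable (by simp)) y).hasFDerivAt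
  have hφd : ∀ y, HasFDerivAt φ (fderiv ℝ φ y) y := fun y =>
    ((hφ.differentiable (by simp)) y).hasFDerivAt
  have hφsq : HasFDerivAt (fun y => φ y^2) ((2*φ x) • fderiv ℝ φ x) x := by
    have h0 := (hφd x).mul (hφd x)
    simpa [pow_two, two_mul, add_smul, Pi.mul_def] using h0
  have hA : HasFDerivAt (fun y => φ y^2 * f y)
      ((φ x^2) • fderiv ℝ f x + (f x) • ((2*φ x) • fderiv ℝ φ x)) x := hφsq.mul (hfd x)
  have hG : HasFDerivAt (Gfn f φ q ε)
      ((φ x^2 * f x) • ((((q-2)/2) * (f x^2+ε)^((q-2)/2-1) * (2*f x)) • fderiv ℝ f x)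
        + (Wfn f q ε x) • ((φ x^2) • fderiv ℝ f x + (f x) • ((2*φ x) • fderiv ℝ φ x))) x :=
    hA.mul (Wfn_hasFDerivAt hf hε x)
  rw [hG.fderiv]
  simp only [ContinuousLinearMap.add_apply, ContinuousLinearMap.smul_apply, smul_eq_mul,
    Wfn, Ffn]
  ring

lemma Gfn_hasCompactSupport (hφc : HasCompactSupport φ) :
    HasCompactSupport (Gfn f φ q ε) :=
  HasCompactSupport.intro hφc (fun x hx => by
    simp [Gfn, image_eq_zero_of_notMem_tsupport hx])

lemma Gfn_differentiable (hf : ContDiff ℝ (⊤:ℕ∞) f) (hφ : ContDiff ℝ (⊤:ℕ∞) φ)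
    (hε : 0 < ε) : Differentiable ℝ (Gfn f φ q ε) := by
  intro x
  have hfd : ∀ y, HasFDerivAt f (fderiv ℝ f y) y := fun y =>
    ((hf.differentiable (by simp)) y).hasFDerivAt
  have hφd : ∀ y, HasFDerivAt φ (fderiv ℝ φ y) y := fun y =>
    ((hφ.differentiable (by simp)) y).hasFDerivAt
  have hφsq : HasFDerivAt (fun y => φ y^2) ((2*φ x) • fderiv ℝ φ x) x := by
    have h0 := (hφd x).mul (hφd x)
    simpa [pow_two, two_mul, add_smul, Pi.mul_def] using h0
  exact ((hφsq.mul (hfd x)).mul (Wfn_hasFDerivAt hf hε x)).differentiableAt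

lemma Wfn_continuous (hf : ContDiff ℝ (⊤:ℕ∞) f) (hε : 0 < ε) :
    Continuous (Wfn f q ε) := by
  apply Continuous.rpow_const
  · exact (hf.continuous.pow 2).add continuous_const
  · intro x
    left
    positivity
end

section
variable {n : ℕ} {f φ : EuclideanSpace ℝ (Fin n) → ℝ} {q ε c lam : ℝ}

lemma caccio_eps (hf : ContDiff ℝ (⊤:ℕ∞) f) (hφ : ContDiff ℝ (⊤:ℕ∞) φ)
    (hφc : HasCompactSupport φ) (heigen : ∀ x, lap f x = lam * f x) (hε : 0 < ε)
    (hc : 0 < c) (hc1 : c ≤ 1) (hcq : c ≤ q - 1) :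
    lam * ∫ x, φ x^2 * (f x^2 * Wfn f q ε x) ≤
      (1/c) * ∫ x, (∑ i, (fderiv ℝ φ x (EuclideanSpace.single i 1))^2) *
        (f x^2 * Wfn f q ε x) := by
  have htop : ((⊤:ℕ∞) : WithTop ℕ∞) + 1 ≤ ((⊤:ℕ∞) : WithTop ℕ∞) := by
    exact_mod_cast le_top
  have hFiC : ∀ i, ContDiff ℝ (⊤:ℕ∞) (Ffn f i) := fun i =>
    (hf.fderiv_right htop).clm_apply contDiff_const
  have hFidiff : ∀ i, Differentiable ℝ (Ffn f i) := fun i =>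
    (hFiC i).differentiable (by simp)
  have hd2 : ∀ i, Continuous fun x =>
      fderiv ℝ (Ffn f i) x (EuclideanSpace.single i (1:ℝ)) := fun i =>
    (((hFiC i).fderiv_right htop).clm_apply contDiff_const).continuous
  have cdφ : ∀ i : Fin n, Continuous fun x =>
      fderiv ℝ φ x (EuclideanSpace.single i (1:ℝ)) := fun i =>
    ((hφ.fderiv_right htop).clm_apply contDiff_const).continuous
  have hWc : Continuous (Wfn f q ε) := Wfn_continuous hf hε
  have hW1c : Continuous fun x => (f x^2+ε)^((q-2)/2-1) := by
    apply Continuous.rpow_const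
    · exact (hf.continuous.pow 2).add continuous_const
    · intro x; left; positivity
  have hGc : Continuous (Gfn f φ q ε) :=
    ((hφ.continuous.pow 2).mul hf.continuous).mul hWc
  have hG0 : ∀ x, x ∉ tsupport φ → Gfn f φ q ε x = 0 := fun x hx => by
    simp [Gfn, image_eq_zero_of_notMem_tsupport hx]
  have hGsupp : HasCompactSupport (Gfn f φ q ε) := HasCompactSupport.intro hφc hG0
  have hdφ0 : ∀ x, x ∉ tsupport φ → fderiv ℝ φ x = 0 := fun x hx => by
    by_contra h
    exact hx (support_fderiv_subset ℝ (Function.mem_support.2 h))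
  have hdg0 : ∀ x, x ∉ tsupport φ → fderiv ℝ (Gfn f φ q ε) x = 0 := by
    intro x hx
    have hsub : tsupport (Gfn f φ q ε) ⊆ tsupport φ :=
      closure_minimal (fun y hy => by
        by_contra h
        exact (Function.mem_support.1 hy) (hG0 y h)) (isClosed_tsupport φ)
    by_contra h
    exact hx (hsub (support_fderiv_subset ℝ (Function.mem_support.2 h)))
  have cdg : ∀ i : Fin n, Continuous fun x =>
      fderiv ℝ (Gfn f φ q ε) x (EuclideanSpace.single i (1:ℝ)) := by
    intro i
    have e : (fun x => fderiv ℝ (Gfn f φ q ε) x (EuclideanSpace.single i (1:ℝ)))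
        = fun x => 2*(φ x)*(fderiv ℝ φ x (EuclideanSpace.single i 1))*(f x)*(f x^2+ε)^((q-2)/2)
          + (φ x)^2*(Ffn f i x)*(f x^2+ε)^((q-2)/2)
          + (φ x)^2*(f x)*(2*((q-2)/2)*(f x)*(f x^2+ε)^((q-2)/2-1))*(Ffn f i x) :=
      funext fun x => Gfn_fderiv_apply hf hφ hε x i
    rw [e]
    have hW' : Continuous fun x : EuclideanSpace ℝ (Fin n) => (f x^2+ε)^((q-2)/2) := hWc
    exact (((((continuous_const.mul hφ.continuous).mul (cdφ i)).mul hf.continuous).mul hW').add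
      (((hφ.continuous.pow 2).mul (hFiC i).continuous).mul hW')).add
        ((((hφ.continuous.pow 2).mul hf.continuous).mul
          ((continuous_const.mul hf.continuous).mul hW1c)).mul (hFiC i).continuous)
  have int1 : ∀ i : Fin n, Integrable (fun x =>
      Gfn f φ q ε x * fderiv ℝ (Ffn f i) x (EuclideanSpace.single i (1:ℝ))) := fun i =>
    (hGc.mul (hd2 i)).integrable_of_hasCompactSupport
      (HasCompactSupport.intro hφc (fun x hx => by simp [hG0 x hx]))
  have int2 : ∀ i : Fin n, Integrable (fun x =>
      fderiv ℝ (Gfn f φ q ε) x (EuclideanSpace.single i (1:ℝ)) * Ffn f i x) := fun i =>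
    ((cdg i).mul (hFiC i).continuous).integrable_of_hasCompactSupport
      (HasCompactSupport.intro hφc (fun x hx => by simp [hdg0 x hx]))
  have int3 : ∀ i : Fin n, Integrable (fun x =>
      Gfn f φ q ε x * Ffn f i x) := fun i =>
    (hGc.mul (hFiC i).continuous).integrable_of_hasCompactSupport
      (HasCompactSupport.intro hφc (fun x hx => by simp [hG0 x hx]))
  have intL : Integrable (fun x => -∑ i : Fin n,
      fderiv ℝ (Gfn f φ q ε) x (EuclideanSpace.single i (1:ℝ)) * Ffn f i x) :=
    (integrable_finset_sum _ (fun i _ => int2 i)).neg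
  have intR : Integrable (fun x =>
      (1/c) * (∑ i : Fin n, (fderiv ℝ φ x (EuclideanSpace.single i 1))^2) *
        (f x^2 * Wfn f q ε x)) := by
    apply Continuous.integrable_of_hasCompactSupport
    · exact (continuous_const.mul
        (continuous_finset_sum _ (fun i _ => (cdφ i).pow 2))).mul
        ((hf.continuous.pow 2).mul hWc)
    · exact HasCompactSupport.intro hφc (fun x hx => by simp [hdφ0 x hx])
  have ibp : ∀ i : Fin n,
      ∫ x, Gfn f φ q ε x * fderiv ℝ (Ffn f i) x (EuclideanSpace.single i (1:ℝ))
        = -∫ x, fderiv ℝ (Gfn f φ q ε) x (EuclideanSpace.single i (1:ℝ)) * Ffn f i x :=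
    fun i => integral_mul_fderiv_eq_neg_fderiv_mul_of_integrable (int2 i) (int1 i) (int3 i)
      (fun x _ => Gfn_differentiable hf hφ hε x) (fun x _ => hFidiff i x)
  calc lam * ∫ x, φ x^2 * (f x^2 * Wfn f q ε x)
      = ∫ x, Gfn f φ q ε x * lap f x := by
        rw [← integral_const_mul]
        apply congrArg
        funext x
        rw [heigen x]
        simp only [Gfn]
        ring
    _ = ∑ i : Fin n, ∫ x, Gfn f φ q ε x *
          fderiv ℝ (Ffn f i) x (EuclideanSpace.single i (1:ℝ)) := by
        rw [← integral_finset_sum _ (fun i _ => int1 i)]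
        apply congrArg
        funext x
        rw [lap, Finset.mul_sum]
        rfl
    _ = ∑ i : Fin n, -∫ x,
          fderiv ℝ (Gfn f φ q ε) x (EuclideanSpace.single i (1:ℝ)) * Ffn f i x := by
        exact Finset.sum_congr rfl (fun i _ => ibp i)
    _ = ∫ x, -∑ i : Fin n,
          fderiv ℝ (Gfn f φ q ε) x (EuclideanSpace.single i (1:ℝ)) * Ffn f i x := by
        rw [integral_neg, integral_finset_sum _ (fun i _ => int2 i)]
        exact Finset.sum_neg_distrib _
    _ ≤ ∫ x, (1/c) * (∑ i : Fin n, (fderiv ℝ φ x (EuclideanSpace.single i 1))^2) *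
          (f x^2 * Wfn f q ε x) := by
        apply integral_mono intL intR
        intro x
        simp only [Gfn_fderiv_apply hf hφ hε, Wfn]
        have := ptwise q ε c hε hc hc1 hcq (φ x) (f x)
          (fun i => fderiv ℝ φ x (EuclideanSpace.single i 1))
          (fun i => Ffn f i x)
        calc _ ≤ (1/c) * (∑ i : Fin n, (fderiv ℝ φ x (EuclideanSpace.single i 1))^2) *
              ((f x)^2 * ((f x)^2+ε)^((q-2)/2)) := this
          _ = _ := by ring
    _ = (1/c) * ∫ x, (∑ i : Fin n, (fderiv ℝ φ x (EuclideanSpace.single i 1))^2) *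
          (f x^2 * Wfn f q ε x) := by
        rw [← integral_const_mul]
        apply congrArg
        funext x
        ring

end

lemma sq_mul_rpow_self {b q : ℝ} (hb : b ≠ 0) : b^2 * (b^2)^((q-2)/2) = |b|^q := by
  have hu : 0 < |b| := abs_pos.2 hb
  have e1 : b^2 = |b| ^ (2:ℝ) := by
    rw [show ((2:ℝ)) = ((2:ℕ):ℝ) by norm_num, Real.rpow_natCast]
    exact (sq_abs b).symm
  calc b^2*(b^2)^((q-2)/2) = |b|^(2:ℝ) * (|b|^(2:ℝ))^((q-2)/2) := by rw [e1]
    _ = |b|^(2:ℝ) * |b|^((2:ℝ)*((q-2)/2)) := by rw [← Real.rpow_mul (abs_nonneg b)]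
    _ = |b|^((2:ℝ) + 2*((q-2)/2)) := by rw [← Real.rpow_add hu]
    _ = |b|^q := by congr 1; ring

lemma core_bound (q : ℝ) (hq : 1 < q) (b ε : ℝ) (hε : 0 < ε) (hε1 : ε ≤ 1) :
    b^2 * (b^2+ε)^((q-2)/2) ≤ (b^2+1)^(max ((q-2)/2) 0) * (b^2 + |b|^q) := by
  rcases le_or_gt 0 ((q-2)/2) with hα | hα
  · rw [max_eq_left hα]
    have h1 : (b^2+ε)^((q-2)/2) ≤ (b^2+1)^((q-2)/2) :=
      Real.rpow_le_rpow (by positivity) (by linarith) hα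
    have h2 : b^2 ≤ b^2 + |b|^q := le_add_of_nonneg_right (by positivity)
    have := mul_le_mul h1 h2 (sq_nonneg b) (Real.rpow_nonneg (by positivity) _)
    nlinarith [this]
  · rw [max_eq_right hα.le, Real.rpow_zero, one_mul]
    rcases eq_or_ne b 0 with rfl | hb
    · have h0 : |(0:ℝ)|^q = 0 := by
        rw [abs_zero, Real.zero_rpow (show q ≠ 0 by intro h; rw [h] at hq; linarith)]
      rw [h0]
      norm_num
    · have hb2 : (0:ℝ) < b^2 := by positivity
      have h1 : (b^2+ε)^((q-2)/2) ≤ (b^2)^((q-2)/2) :=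
        Real.rpow_le_rpow_of_nonpos hb2 (by linarith) hα.le
      have h2 := sq_mul_rpow_self (q := q) hb
      nlinarith [mul_le_mul_of_nonneg_left h1 (sq_nonneg b),
        Real.rpow_nonneg (abs_nonneg b) q]

section
variable {n : ℕ} {f : EuclideanSpace ℝ (Fin n) → ℝ} {q : ℝ}

lemma tendsto_Wfn_integral (hf : ContDiff ℝ (⊤:ℕ∞) f) (hq : 1 < q)
    {G : EuclideanSpace ℝ (Fin n) → ℝ} (hG : Continuous G) (hGc : HasCompactSupport G)
    (hGnn : ∀ x, 0 ≤ G x) :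
    Tendsto (fun k : ℕ => ∫ x, G x * (f x^2 * (f x^2 + 1/((k:ℝ)+1))^((q-2)/2))) atTop
      (𝓝 (∫ x, G x * |f x|^q)) := by
  have hq0 : (0:ℝ) < q := by linarith
  have hfc := hf.continuous
  have hfq : Continuous fun x : EuclideanSpace ℝ (Fin n) => |f x|^q :=
    hfc.abs.rpow_const (fun x => Or.inr hq0.le)
  have hεpos : ∀ k : ℕ, (0:ℝ) < 1/((k:ℝ)+1) := fun k => by positivity
  have hεle : ∀ k : ℕ, (1:ℝ)/((k:ℝ)+1) ≤ 1 := fun k => by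
    rw [div_le_one (by positivity)]
    exact le_add_of_nonneg_left (Nat.cast_nonneg k)
  apply tendsto_integral_of_dominated_convergence
    (bound := fun x => G x * ((f x^2+1)^(max ((q-2)/2) 0) * (f x^2 + |f x|^q)))
  · intro k
    exact (hG.mul ((hfc.pow 2).mul
      (((hfc.pow 2).add (continuous_const (y := 1/((k:ℝ)+1)))).rpow_const
        (fun x => Or.inl (add_pos_of_nonneg_of_pos (sq_nonneg _) (hεpos k)).ne')))).aestronglyMeasurable
  · apply Continuous.integrable_of_hasCompactSupport
    · exact hG.mul ((((hfc.pow 2).add (continuous_const (y := (1:ℝ)))).rpow_const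
        (fun x => Or.inl (add_pos_of_nonneg_of_pos (sq_nonneg _) one_pos).ne')).mul ((hfc.pow 2).add hfq))
    · exact HasCompactSupport.intro hGc
        (fun x hx => by simp [image_eq_zero_of_notMem_tsupport hx])
  · intro k
    apply Filter.Eventually.of_forall
    intro x
    have hnn : 0 ≤ G x * (f x^2 * (f x^2 + 1/((k:ℝ)+1))^((q-2)/2)) :=
      mul_nonneg (hGnn x) (mul_nonneg (sq_nonneg _) (Real.rpow_nonneg (by positivity) _))
    rw [Real.norm_eq_abs, abs_of_nonneg hnn]
    exact mul_le_mul_of_nonneg_left (core_bound q hq (f x) _ (hεpos k) (hεle k)) (hGnn x)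
  · apply Filter.Eventually.of_forall
    intro x
    apply Tendsto.const_mul
    rcases eq_or_ne (f x) 0 with hb | hb
    · simp only [hb, ne_eq, OfNat.ofNat_ne_zero, not_false_eq_true, zero_pow, zero_mul,
        abs_zero, Real.zero_rpow hq0.ne']
      exact tendsto_const_nhds
    · have hb2 : (0:ℝ) < f x^2 := by positivity
      have hcont : ContinuousAt (fun e : ℝ => f x^2 * (f x^2 + e)^((q-2)/2)) 0 := by
        apply ContinuousAt.mul continuousAt_const
        apply ContinuousAt.rpow_const (continuousAt_const.add continuousAt_id)
        left
        simp [hb2.ne']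
      have hlim0 : Tendsto (fun k:ℕ => 1/((k:ℝ)+1)) atTop (𝓝 0) :=
        tendsto_one_div_add_atTop_nhds_zero_nat
      have hcomp := hcont.tendsto.comp hlim0
      simp only [Function.comp_def, add_zero] at hcomp
      rw [sq_mul_rpow_self hb] at hcomp
      exact hcomp
end


section mainsec
variable {n : ℕ} {f : EuclideanSpace ℝ (Fin n) → ℝ} {q c lam : ℝ}

lemma caccio_limit (hf : ContDiff ℝ (⊤:ℕ∞) f) {φ : EuclideanSpace ℝ (Fin n) → ℝ}
    (hφ : ContDiff ℝ (⊤:ℕ∞) φ) (hφc : HasCompactSupport φ)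
    (heigen : ∀ x, lap f x = lam * f x) (hq1 : 1 < q)
    (hc : 0 < c) (hc1 : c ≤ 1) (hcq : c ≤ q - 1) :
    lam * ∫ x, φ x^2 * |f x|^q ≤
      (1/c) * ∫ x, (∑ i, (fderiv ℝ φ x (EuclideanSpace.single i 1))^2) * |f x|^q := by
  have htop : ((⊤:ℕ∞) : WithTop ℕ∞) + 1 ≤ ((⊤:ℕ∞) : WithTop ℕ∞) := by
    exact_mod_cast le_top
  have cdφ : ∀ i : Fin n, Continuous fun x =>
      fderiv ℝ φ x (EuclideanSpace.single i (1:ℝ)) := fun i =>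
    ((hφ.fderiv_right htop).clm_apply contDiff_const).continuous
  have hdφ0 : ∀ x, x ∉ tsupport φ → fderiv ℝ φ x = 0 := fun x hx => by
    by_contra h
    exact hx (support_fderiv_subset ℝ (Function.mem_support.2 h))
  have T1 := (tendsto_Wfn_integral hf hq1 (G := fun x => φ x^2)
    (hφ.continuous.pow 2)
    (HasCompactSupport.intro hφc (fun x hx => by
      simp [image_eq_zero_of_notMem_tsupport hx]))
    (fun x => sq_nonneg _)).const_mul lam
  have T2 := (tendsto_Wfn_integral hf hq1
    (G := fun x => ∑ i : Fin n, (fderiv ℝ φ x (EuclideanSpace.single i 1))^2)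
    (continuous_finset_sum _ (fun i _ => (cdφ i).pow 2))
    (HasCompactSupport.intro hφc (fun x hx => by simp [hdφ0 x hx]))
    (fun x => Finset.sum_nonneg (fun i _ => sq_nonneg _))).const_mul (1/c)
  apply le_of_tendsto_of_tendsto' T1 T2
  intro k
  have h := caccio_eps (ε := 1/((k:ℝ)+1)) hf hφ hφc heigen (by positivity) hc hc1 hcq
  simpa [Wfn] using h

lemma ring_est {C : ℝ} (hf : ContDiff ℝ (⊤:ℕ∞) f)
    (heigen : ∀ x, lap f x = lam * f x) (hq1 : 1 < q) (hlam : 0 ≤ lam)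
    (hc : 0 < c) (hc1 : c ≤ 1) (hcq : c ≤ q - 1)
    (hC0 : 0 ≤ C) (hC : ∀ t, |deriv cutχ t| ≤ C) {R : ℝ} (hR : 0 < R) :
    lam * ∫ x in ball (0:EuclideanSpace ℝ (Fin n)) R, |f x|^q ≤
      (1/c) * ((12*C^2/R^2) * ∫ x in ball (0:EuclideanSpace ℝ (Fin n)) (3*R), |f x|^q) := by
  have hq0 : (0:ℝ) < q := by linarith
  have hfq : Continuous fun x : EuclideanSpace ℝ (Fin n) => |f x|^q :=
    hf.continuous.abs.rpow_const (fun x => Or.inr hq0.le)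
  have hfqnn : ∀ x : EuclideanSpace ℝ (Fin n), 0 ≤ |f x|^q := fun x =>
    Real.rpow_nonneg (abs_nonneg _) q
  have htop : ((⊤:ℕ∞) : WithTop ℕ∞) + 1 ≤ ((⊤:ℕ∞) : WithTop ℕ∞) := by
    exact_mod_cast le_top
  set φ := phiR (n := n) R with hφdef
  have hφsm : ContDiff ℝ (⊤:ℕ∞) φ := phiR_contDiff R
  have hφc : HasCompactSupport φ := phiR_hasCompactSupport hR
  have cdφ : ∀ i : Fin n, Continuous fun x =>
      fderiv ℝ φ x (EuclideanSpace.single i (1:ℝ)) := fun i =>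
    ((hφsm.fderiv_right htop).clm_apply contDiff_const).continuous
  have hdφ0 : ∀ x, x ∉ tsupport φ → fderiv ℝ φ x = 0 := fun x hx => by
    by_contra h
    exact hx (support_fderiv_subset ℝ (Function.mem_support.2 h))
  have hts : tsupport φ ⊆ closedBall (0:EuclideanSpace ℝ (Fin n)) (2*R) :=
    closure_minimal (fun y hy => by
      by_contra h
      exact (Function.mem_support.1 hy) (phiR_zero hR h)) isClosed_closedBall
  -- main inequality from caccio_limit
  have hmain := caccio_limit hf hφsm hφc heigen hq1 hc hc1 hcq
  -- integrability facts
  have hIphi : Integrable (fun x => φ x^2 * |f x|^q) := by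
    apply Continuous.integrable_of_hasCompactSupport ((hφsm.continuous.pow 2).mul hfq)
    exact HasCompactSupport.intro hφc (fun x hx => by
      simp [image_eq_zero_of_notMem_tsupport hx])
  have hIA : Integrable (fun x =>
      (∑ i : Fin n, (fderiv ℝ φ x (EuclideanSpace.single i 1))^2) * |f x|^q) := by
    apply Continuous.integrable_of_hasCompactSupport
      ((continuous_finset_sum _ (fun i _ => (cdφ i).pow 2)).mul hfq)
    exact HasCompactSupport.intro hφc (fun x hx => by simp [hdφ0 x hx])
  have hIball : ∀ r : ℝ, IntegrableOn (fun x => |f x|^q)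
      (ball (0:EuclideanSpace ℝ (Fin n)) r) := fun r =>
    ((hfq.locallyIntegrable).integrableOn_isCompact
      (isCompact_closedBall _ r)).mono_set ball_subset_closedBall
  -- lower bound for LHS
  have hlow : ∫ x in ball (0:EuclideanSpace ℝ (Fin n)) R, |f x|^q
      ≤ ∫ x, φ x^2 * |f x|^q := by
    have e1 : ∫ x in ball (0:EuclideanSpace ℝ (Fin n)) R, |f x|^q
        = ∫ x in ball (0:EuclideanSpace ℝ (Fin n)) R, φ x^2 * |f x|^q := by
      apply setIntegral_congr_fun measurableSet_ball
      intro x hx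
      have h1 : φ x = 1 := phiR_eq_one hR hx
      show |f x|^q = φ x^2 * |f x|^q
      rw [h1]
      ring
    rw [e1]
    apply setIntegral_le_integral hIphi
    apply Filter.Eventually.of_forall
    intro x
    positivity
  -- upper bound for RHS
  have hup : ∫ x, (∑ i : Fin n, (fderiv ℝ φ x (EuclideanSpace.single i 1))^2) * |f x|^q
      ≤ (12*C^2/R^2) * ∫ x in ball (0:EuclideanSpace ℝ (Fin n)) (3*R), |f x|^q := by
    have hInd : Integrable ((closedBall (0:EuclideanSpace ℝ (Fin n)) (2*R)).indicator
        (fun x => (12*C^2/R^2) * |f x|^q)) := by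
      apply MeasureTheory.IntegrableOn.integrable_indicator _ measurableSet_closedBall
      exact ((hfq.locallyIntegrable).integrableOn_isCompact
        (isCompact_closedBall _ _)).const_mul _
    have hpt : ∀ x, (∑ i : Fin n, (fderiv ℝ φ x (EuclideanSpace.single i 1))^2) * |f x|^q
        ≤ (closedBall (0:EuclideanSpace ℝ (Fin n)) (2*R)).indicator
          (fun x => (12*C^2/R^2) * |f x|^q) x := by
      intro x
      rcases em (x ∈ closedBall (0:EuclideanSpace ℝ (Fin n)) (2*R)) with hx | hx
      · rw [Set.indicator_of_mem hx]
        exact mul_le_mul_of_nonneg_right (phiR_grad_bound hR hC0 hC x) (hfqnn x)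
      · rw [Set.indicator_of_notMem hx]
        have h0 : fderiv ℝ φ x = 0 := hdφ0 x (fun hmem => hx (hts hmem))
        simp [h0]
    calc ∫ x, (∑ i : Fin n, (fderiv ℝ φ x (EuclideanSpace.single i 1))^2) * |f x|^q
        ≤ ∫ x, (closedBall (0:EuclideanSpace ℝ (Fin n)) (2*R)).indicator
            (fun x => (12*C^2/R^2) * |f x|^q) x := integral_mono hIA hInd hpt
      _ = ∫ x in closedBall (0:EuclideanSpace ℝ (Fin n)) (2*R), (12*C^2/R^2) * |f x|^q := by
          rw [integral_indicator measurableSet_closedBall]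
      _ = (12*C^2/R^2) * ∫ x in closedBall (0:EuclideanSpace ℝ (Fin n)) (2*R), |f x|^q := by
          rw [integral_const_mul]
      _ ≤ (12*C^2/R^2) * ∫ x in ball (0:EuclideanSpace ℝ (Fin n)) (3*R), |f x|^q := by
          apply mul_le_mul_of_nonneg_left _ (by positivity)
          apply setIntegral_mono_set (hIball (3*R))
          · exact Filter.Eventually.of_forall (fun x => hfqnn x)
          · apply Filter.Eventually.of_forall
            intro y hy
            have hy' : y ∈ closedBall (0:EuclideanSpace ℝ (Fin n)) (2*R) := hy
            have h2 : ‖y‖ ≤ 2*R := by simpa using hy'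
            show y ∈ ball (0:EuclideanSpace ℝ (Fin n)) (3*R)
            simp only [mem_ball, dist_zero_right]
            linarith
  calc lam * ∫ x in ball (0:EuclideanSpace ℝ (Fin n)) R, |f x|^q
      ≤ lam * ∫ x, φ x^2 * |f x|^q := mul_le_mul_of_nonneg_left hlow hlam
    _ ≤ (1/c) * ∫ x, (∑ i : Fin n, (fderiv ℝ φ x (EuclideanSpace.single i 1))^2) * |f x|^q :=
        hmain
    _ ≤ (1/c) * ((12*C^2/R^2) * ∫ x in ball (0:EuclideanSpace ℝ (Fin n)) (3*R), |f x|^q) :=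
        mul_le_mul_of_nonneg_left hup (by positivity)

end mainsec

/-- Theorem 4.1 for 0-forms on ℝⁿ: nonexistence of a nontrivial eigenfunction with
positive eigenvalue having 2-finite growth: any smooth `f` with `Δf = λf`, `λ > 0`,
and 2-finite growth for some `1 < q < 3` is identically zero. -/
theorem stmt_6 (n : ℕ) (hn : 1 ≤ n) (lam : ℝ) (hlam : 0 < lam)
    (q : ℝ) (hq1 : 1 < q) (hq3 : q < 3)
    (f : EuclideanSpace ℝ (Fin n) → ℝ)
    (hf : ContDiff ℝ (⊤ : ℕ∞) f)
    (heigen : ∀ x, lap f x = lam * f x)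
    (hgrowth : Filter.liminf
      (fun r : ℝ => ENNReal.ofReal (1 / r ^ 2) *
        ∫⁻ x in Metric.ball (0 : EuclideanSpace ℝ (Fin n)) r, ENNReal.ofReal (|f x| ^ q))
      Filter.atTop < ⊤) :
    ∀ x, f x = 0 := by
  classical
  have hq0 : (0:ℝ) < q := by linarith
  have hfq : Continuous fun x : EuclideanSpace ℝ (Fin n) => |f x|^q :=
    hf.continuous.abs.rpow_const (fun x => Or.inr hq0.le)
  have hfqnn : ∀ x : EuclideanSpace ℝ (Fin n), 0 ≤ |f x|^q := fun x =>
    Real.rpow_nonneg (abs_nonneg _) q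
  set c := min 1 (q-1) with hcdef
  have hc : 0 < c := lt_min one_pos (by linarith)
  have hc1 : c ≤ 1 := min_le_left _ _
  have hcq : c ≤ q - 1 := min_le_right _ _
  obtain ⟨C, hC0, hC⟩ := cutχ_deriv_bound
  set I : ℝ → ℝ := fun r => ∫ x in ball (0:EuclideanSpace ℝ (Fin n)) r, |f x|^q with hIdef
  have hIball : ∀ r : ℝ, IntegrableOn (fun x => |f x|^q)
      (ball (0:EuclideanSpace ℝ (Fin n)) r) := fun r =>
    ((hfq.locallyIntegrable).integrableOn_isCompact
      (isCompact_closedBall _ r)).mono_set ball_subset_closedBall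
  have hInn : ∀ r, 0 ≤ I r := fun r =>
    setIntegral_nonneg measurableSet_ball (fun x _ => hfqnn x)
  have hImono : ∀ r s : ℝ, r ≤ s → I r ≤ I s := fun r s hrs =>
    setIntegral_mono_set (hIball s) (Filter.Eventually.of_forall (fun x => hfqnn x))
      ((ball_subset_ball hrs).eventuallyLE)
  have hkey : ∀ R : ℝ, 0 < R → lam * I R ≤ (1/c) * ((12*C^2/R^2) * I (3*R)) := fun R hR =>
    ring_est hf heigen hq1 hlam.le hc hc1 hcq hC0 hC hR
  have hlin : ∀ r : ℝ, (∫⁻ x in ball (0:EuclideanSpace ℝ (Fin n)) r,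
      ENNReal.ofReal (|f x|^q)) = ENNReal.ofReal (I r) := fun r =>
    (MeasureTheory.ofReal_integral_eq_lintegral_ofReal (hIball r)
      (Filter.Eventually.of_forall (fun x => hfqnn x))).symm
  set L := Filter.liminf
      (fun r : ℝ => ENNReal.ofReal (1 / r ^ 2) *
        ∫⁻ x in Metric.ball (0 : EuclideanSpace ℝ (Fin n)) r, ENNReal.ofReal (|f x| ^ q))
      Filter.atTop with hLdef
  have hLtop : L + 1 ≠ ⊤ := ENNReal.add_ne_top.2 ⟨hgrowth.ne, ENNReal.one_ne_top⟩
  have hfreq : ∃ᶠ r in Filter.atTop,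
      (ENNReal.ofReal (1 / r ^ 2) *
        ∫⁻ x in Metric.ball (0 : EuclideanSpace ℝ (Fin n)) r,
          ENNReal.ofReal (|f x| ^ q)) < L + 1 :=
    Filter.frequently_lt_of_liminf_lt (by isBoundedDefault)
      (ENNReal.lt_add_right hgrowth.ne one_ne_zero)
  set A := (L+1).toReal with hAdef
  have hAnn : 0 ≤ A := ENNReal.toReal_nonneg
  have hIA : ∀ N : ℝ, ∃ r : ℝ, N ≤ r ∧ 1 ≤ r ∧ I r ≤ A * r^2 := by
    intro N
    obtain ⟨r, hr1, hr2⟩ := (hfreq.and_eventually (eventually_ge_atTop (max N 1))).exists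
    refine ⟨r, le_trans (le_max_left _ _) hr2, le_trans (le_max_right _ _) hr2, ?_⟩
    have hrpos : (0:ℝ) < r := lt_of_lt_of_le one_pos (le_trans (le_max_right N 1) hr2)
    rw [hlin r] at hr1
    have h2 : ENNReal.ofReal ((1/r^2) * I r) < L+1 := by
      rw [ENNReal.ofReal_mul (by positivity)]
      exact hr1
    have h3 : (1/r^2) * I r ≤ A :=
      (ENNReal.ofReal_le_iff_le_toReal hLtop).1 h2.le
    have hr2ne : r^2 ≠ 0 := by positivity
    calc I r = ((1/r^2)*I r)*r^2 := by field_simp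
      _ ≤ A * r^2 := mul_le_mul_of_nonneg_right h3 (by positivity)
  have hbound : ∀ s : ℝ, I s ≤ ((1/c)*(108*C^2*A))/lam := by
    intro s
    obtain ⟨r, hrN, hr1, hrA⟩ := hIA (max (3*s) 1)
    have hr0 : (0:ℝ) < r := by linarith
    have h1 := hkey (r/3) (by linarith)
    have h2 : (3:ℝ)*(r/3) = r := by ring
    rw [h2] at h1
    have h3 : (12*C^2/((r/3)^2)) * I r ≤ 108*C^2*A := by
      have e : (12*C^2/((r/3)^2)) = 108*C^2/r^2 := by
        field_simp
        ring
      rw [e]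
      calc 108*C^2/r^2 * I r ≤ 108*C^2/r^2 * (A*r^2) :=
            mul_le_mul_of_nonneg_left hrA (by positivity)
        _ = 108*C^2*A := by field_simp
    have h4 : lam * I (r/3) ≤ (1/c)*(108*C^2*A) :=
      le_trans h1 (mul_le_mul_of_nonneg_left h3 (by positivity))
    have hsr : s ≤ r/3 := by
      have h5 : 3*s ≤ r := le_trans (le_max_left (3*s) 1) hrN
      linarith
    have h6 : I (r/3) ≤ ((1/c)*(108*C^2*A))/lam := by
      rw [le_div_iff₀ hlam]
      linarith
    exact le_trans (hImono s (r/3) hsr) h6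
  set M := ((1/c)*(108*C^2*A))/lam with hMdef
  have hMnn : 0 ≤ M := by positivity
  have hzero : ∀ s : ℝ, I s = 0 := by
    intro s
    refine le_antisymm ?_ (hInn s)
    have hev : ∀ᶠ R in Filter.atTop, I s ≤ ((1/lam)*(1/c)*(12*C^2)*M) / R^2 := by
      filter_upwards [eventually_ge_atTop (max s 1)] with R hR
      have hR1 : (1:ℝ) ≤ R := le_trans (le_max_right s 1) hR
      have hR0 : (0:ℝ) < R := by linarith
      have h1 := hkey R hR0
      have h2 : I (3*R) ≤ M := hbound (3*R)
      have h3 : I s ≤ I R := hImono _ _ (le_trans (le_max_left s 1) hR)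
      have h4 : (12*C^2/R^2) * I (3*R) ≤ (12*C^2*M)/R^2 := by
        calc (12*C^2/R^2) * I (3*R) ≤ (12*C^2/R^2) * M :=
              mul_le_mul_of_nonneg_left h2 (by positivity)
          _ = (12*C^2*M)/R^2 := by ring
      have h5 : lam * I R ≤ (1/c)*((12*C^2*M)/R^2) :=
        le_trans h1 (mul_le_mul_of_nonneg_left h4 (by positivity))
      have h7 : I R ≤ ((1/c)*((12*C^2*M)/R^2))/lam := by
        rw [le_div_iff₀ hlam]
        linarith
      have hR2 : R^2 ≠ 0 := by positivity
      have hlamne : lam ≠ 0 := hlam.ne'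
      calc I s ≤ I R := h3
        _ ≤ ((1/c)*((12*C^2*M)/R^2))/lam := h7
        _ = ((1/lam)*(1/c)*(12*C^2)*M)/R^2 := by ring
    have htend : Filter.Tendsto (fun R : ℝ => ((1/lam)*(1/c)*(12*C^2)*M) / R^2)
        Filter.atTop (𝓝 0) :=
      Filter.Tendsto.div_atTop tendsto_const_nhds (tendsto_pow_atTop (by norm_num))
    exact ge_of_tendsto htend hev
  intro x
  by_contra hfx
  have hs : x ∈ ball (0:EuclideanSpace ℝ (Fin n)) (‖x‖+1) := by
    simp only [mem_ball, dist_zero_right]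
    linarith
  have hI0 : I (‖x‖+1) = 0 := hzero (‖x‖+1)
  have hae : (fun y => |f y|^q)
      =ᵐ[volume.restrict (ball (0:EuclideanSpace ℝ (Fin n)) (‖x‖+1))] 0 :=
    (integral_eq_zero_iff_of_nonneg (fun y => hfqnn y) (hIball (‖x‖+1))).1 hI0
  have hopen : IsOpen {y : EuclideanSpace ℝ (Fin n) | |f y|^q ≠ 0} :=
    isOpen_ne.preimage hfq
  have hnull : volume ({y : EuclideanSpace ℝ (Fin n) | |f y|^q ≠ 0}
      ∩ ball (0:EuclideanSpace ℝ (Fin n)) (‖x‖+1)) = 0 := by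
    have h0 : volume.restrict (ball (0:EuclideanSpace ℝ (Fin n)) (‖x‖+1))
        {y | |f y|^q ≠ 0} = 0 := by
      have h1 := hae
      rw [Filter.EventuallyEq, ae_iff] at h1
      simpa using h1
    rwa [Measure.restrict_apply hopen.measurableSet] at h0
  have hUsub : (ball (0:EuclideanSpace ℝ (Fin n)) (‖x‖+1) ∩ {y | f y ≠ 0})
      ⊆ {y : EuclideanSpace ℝ (Fin n) | |f y|^q ≠ 0}
        ∩ ball (0:EuclideanSpace ℝ (Fin n)) (‖x‖+1) := by
    rintro y ⟨hy1, hy2⟩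
    exact ⟨ne_of_gt (Real.rpow_pos_of_pos (abs_pos.2 hy2) q), hy1⟩
  have hUopen : IsOpen (ball (0:EuclideanSpace ℝ (Fin n)) (‖x‖+1) ∩ {y | f y ≠ 0}) :=
    isOpen_ball.inter (isOpen_ne.preimage hf.continuous)
  have hUne : (ball (0:EuclideanSpace ℝ (Fin n)) (‖x‖+1) ∩ {y | f y ≠ 0}).Nonempty :=
    ⟨x, hs, hfx⟩
  have hpos := hUopen.measure_pos volume hUne
  exact absurd (measure_mono_null hUsub hnull) hpos.ne'
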